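/- For every integer m ≥ 2, the function y ↦ e^{2πiy}/(y − 2i)^m is (Bochner) integrable on ℝ and ∫_ℝ e^{2πiy}/(y − 2i)^m dy = (2πi)^m · e^{−4π} / (m−1)!. -/

import Mathlib

open Complex Real MeasureTheory Set Filter
open scoped FourierTransform Topology

lemma aux_integrableOn_real (n : ℕ) {b : ℝ} (hb : 0 < b) :
    IntegrableOn (fun t : ℝ => t ^ n * Real.exp (-(b * t))) (Ioi 0) := by
  have h := integrableOn_rpow_mul_exp_neg_mul_rpow (p := 1) (s := (n : ℝ)) (b := b)
    (lt_of_lt_of_le (by norm_num) (Nat.cast_nonneg n)) zero_lt_one hb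
  refine h.congr_fun (fun x hx => ?_) measurableSet_Ioi
  dsimp only
  rw [Real.rpow_natCast, Real.rpow_one, neg_mul]

lemma aux_integrableOn (n : ℕ) {c : ℂ} (hc : 0 < c.re) :
    IntegrableOn (fun t : ℝ => (t : ℂ) ^ n * Complex.exp (-(c * t))) (Ioi 0) := by
  refine ((aux_integrableOn_real n hc).mono' ?_ ?_)
  · exact (Continuous.mul (by continuity) (by continuity)).aestronglyMeasurable
  · refine (ae_restrict_iff' measurableSet_Ioi).2 (ae_of_all _ fun t ht => ?_)
    have : ‖(t : ℂ) ^ n * Complex.exp (-(c * t))‖ = |t| ^ n * Real.exp (-(c.re * t)) := by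
      simp [Complex.norm_exp, Complex.mul_re]
    rw [this, abs_of_pos ht]

lemma aux_gamma (n : ℕ) {c : ℂ} (hc : 0 < c.re) :
    ∫ t : ℝ in Ioi 0, (t : ℂ) ^ n * Complex.exp (-(c * t)) = (Nat.factorial n : ℂ) / c ^ (n + 1) := by
  have hcne : c ≠ 0 := fun h => by simp [h] at hc
  induction n with
  | zero =>
    have hderiv : ∀ x ∈ Ici (0:ℝ), HasDerivAt (fun t : ℝ => -Complex.exp (-(c * t)) / c)
        ((fun t : ℝ => ((t:ℂ))^0 * Complex.exp (-(c * t))) x) x := by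
      intro x _
      have h2 : HasDerivAt (fun z : ℂ => -Complex.exp (-(c * z)) / c)
          (Complex.exp (-(c * x))) (x : ℂ) := by
        have := (((hasDerivAt_id (x:ℂ)).const_mul c).neg.cexp).neg.div_const c
        simpa [mul_comm, hcne] using this
      simpa using h2.comp_ofReal
    have htend : Tendsto (fun t : ℝ => -Complex.exp (-(c * t)) / c) atTop (𝓝 0) := by
      rw [tendsto_zero_iff_norm_tendsto_zero]
      have : (fun t : ℝ => ‖-Complex.exp (-(c * t)) / c‖)
          = fun t : ℝ => Real.exp (-(c.re * t)) / ‖c‖ := by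
        ext t; simp [Complex.norm_exp, Complex.mul_re]
      rw [this]
      have h1 : Tendsto (fun t : ℝ => -(c.re * t)) atTop atBot := by
        exact tendsto_neg_atBot_iff.2 (tendsto_id.const_mul_atTop hc)
      simpa using (Real.tendsto_exp_atBot.comp h1).div_const ‖c‖
    have := integral_Ioi_of_hasDerivAt_of_tendsto' hderiv (aux_integrableOn 0 hc) htend
    rw [this]
    rw [Complex.ofReal_zero, mul_zero, neg_zero, Complex.exp_zero]
    simp [hcne]
    ring
  | succ n ih =>
    set F : ℝ → ℂ := fun t => -((t:ℂ) ^ (n+1) * Complex.exp (-(c * t))) / c with hF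
    set f' : ℝ → ℂ := fun t => (t:ℂ) ^ (n+1) * Complex.exp (-(c * t))
      - ((n+1 : ℂ) / c) * ((t:ℂ) ^ n * Complex.exp (-(c * t))) with hf'
    have hderiv : ∀ x ∈ Ici (0:ℝ), HasDerivAt F (f' x) x := by
      intro x _
      have h2 : HasDerivAt (fun z : ℂ => -(z ^ (n+1) * Complex.exp (-(c * z))) / c)
          (f' x) (x : ℂ) := by
        have hp := hasDerivAt_pow (n+1) (x:ℂ)
        have he : HasDerivAt (fun z : ℂ => Complex.exp (-(c * z)))
            (-c * Complex.exp (-(c * (x:ℂ)))) (x:ℂ) := by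
          simpa [mul_comm] using ((hasDerivAt_id (x:ℂ)).const_mul c).neg.cexp
        have := ((hp.fun_mul he).fun_neg).div_const c
        convert this using 1
        · rfl
        · rfl
        simp only [f', Nat.add_sub_cancel]
        field_simp
        push_cast
        ring
      exact h2.comp_ofReal
    have htend : Tendsto F atTop (𝓝 0) := by
      rw [tendsto_zero_iff_norm_tendsto_zero]
      have heq : (fun t : ℝ => t ^ ((n:ℝ)+1) * Real.exp (-(c.re * t)) / ‖c‖)
          =ᶠ[atTop] fun t : ℝ => ‖F t‖ := by
        filter_upwards [eventually_gt_atTop (0:ℝ)] with t ht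
        simp [hF, Complex.norm_exp, Complex.mul_re, abs_of_pos ht,
          ← Real.rpow_natCast t (n+1), mul_div_assoc]
      refine Tendsto.congr' heq ?_
      simpa [neg_mul] using
        ((tendsto_rpow_mul_exp_neg_mul_atTop_nhds_zero ((n:ℝ)+1) c.re hc).div_const ‖c‖)
    have hint1 := aux_integrableOn (n+1) (c := c) hc
    have hint2 := (aux_integrableOn n (c := c) hc).const_mul ((n+1 : ℂ) / c)
    have hFTC := integral_Ioi_of_hasDerivAt_of_tendsto' hderiv (hint1.sub hint2) htend
    have h0 : F 0 = 0 := by simp [hF]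
    rw [h0, sub_zero] at hFTC
    rw [hf', MeasureTheory.integral_sub hint1 hint2, sub_eq_zero,
      integral_const_mul, ih] at hFTC
    rw [hFTC, Nat.factorial_succ]
    push_cast
    rw [div_mul_div_comm, ← pow_succ']

lemma aux_norm_bound (m : ℕ) (hm : 2 ≤ m) (y : ℝ) :
    1 + y ^ 2 ≤ ‖(y : ℂ) - 2 * Complex.I‖ ^ m := by
  have h2 : ‖(y : ℂ) - 2 * Complex.I‖ ^ 2 = y ^ 2 + 4 := by
    rw [Complex.sq_norm, Complex.normSq_apply]
    simp
    ring
  have h1 : (1 : ℝ) ≤ ‖(y : ℂ) - 2 * Complex.I‖ := by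
    nlinarith [norm_nonneg ((y : ℂ) - 2 * Complex.I), sq_nonneg y]
  calc 1 + y ^ 2 ≤ ‖(y : ℂ) - 2 * Complex.I‖ ^ 2 := by nlinarith
    _ ≤ ‖(y : ℂ) - 2 * Complex.I‖ ^ m := pow_le_pow_right₀ h1 hm

lemma aux_ne (y : ℝ) : ((y : ℂ) - 2 * Complex.I) ≠ 0 := by
  intro h
  have := congrArg Complex.im h
  simp at this


/-- Contour-integral evaluation: for `m ≥ 2`, `y ↦ e^{2πiy}/(y − 2i)^m` is integrable on `ℝ`
and `∫_ℝ e^{2πiy}/(y − 2i)^m dy = (2πi)^m · e^{−4π} / (m−1)!`. -/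
theorem integral_exp_div_pow (m : ℕ) (hm : 2 ≤ m) :
    Integrable (fun y : ℝ => Complex.exp (2 * (π : ℂ) * Complex.I * (y : ℂ)) /
      ((y : ℂ) - 2 * Complex.I) ^ m) ∧
    ∫ y : ℝ, Complex.exp (2 * (π : ℂ) * Complex.I * (y : ℂ)) /
        ((y : ℂ) - 2 * Complex.I) ^ m =
      (2 * (π : ℂ) * Complex.I) ^ m * Complex.exp (-4 * (π : ℂ)) /
        ((Nat.factorial (m - 1) : ℂ)) := by
  have hπ : (0:ℝ) < π := Real.pi_pos
  -- the integrand is integrable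
  have hcont : Continuous (fun y : ℝ => Complex.exp (2 * (π : ℂ) * Complex.I * (y : ℂ)) /
      ((y : ℂ) - 2 * Complex.I) ^ m) := by
    apply Continuous.div
    · continuity
    · continuity
    · exact fun y => pow_ne_zero m (aux_ne y)
  have hint : Integrable (fun y : ℝ => Complex.exp (2 * (π : ℂ) * Complex.I * (y : ℂ)) /
      ((y : ℂ) - 2 * Complex.I) ^ m) := by
    refine integrable_inv_one_add_sq.mono' hcont.aestronglyMeasurable (ae_of_all _ fun y => ?_)
    rw [norm_div, norm_pow]
    have h1 : ‖Complex.exp (2 * (π : ℂ) * Complex.I * (y : ℂ))‖ = 1 := by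
      rw [Complex.norm_exp]
      norm_num [Complex.mul_re, Complex.mul_im]
    rw [h1]
    have hb := aux_norm_bound m hm y
    have hpos : (0:ℝ) < 1 + y ^ 2 := by positivity
    rw [div_le_iff₀ (lt_of_lt_of_le hpos hb), inv_mul_eq_div, le_div_iff₀ hpos, one_mul]
    exact hb
  refine ⟨hint, ?_⟩
  set n := m - 1 with hn
  have hmn : n + 1 = m := Nat.sub_add_cancel (by omega)
  set g : ℝ → ℂ := fun t => (t : ℂ) ^ n * Complex.exp (-((4 * (π : ℂ)) * t)) with hg
  set f : ℝ → ℂ := Set.indicator (Ioi 0) g with hf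
  have hcre : (0:ℝ) < (4 * (π : ℂ)).re := by simp; positivity
  have hf_int : Integrable f := by
    rw [hf, integrable_indicator_iff measurableSet_Ioi]
    exact aux_integrableOn n hcre
  -- compute the Fourier transform of `f`
  have hFf : ∀ y : ℝ, 𝓕 f y =
      (Nat.factorial n : ℂ) / (2 * π * Complex.I * ((y : ℂ) - 2 * Complex.I)) ^ m := by
    intro y
    rw [Real.fourier_real_eq_integral_exp_smul]
    have hc : (0:ℝ) < (4 * (π : ℂ) + 2 * π * y * Complex.I).re := by
      simp [Complex.add_re, Complex.mul_re]; positivity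
    have heq : ∀ v : ℝ, Complex.exp (↑(-2 * π * v * y) * Complex.I) • f v
        = Set.indicator (Ioi 0)
          (fun v : ℝ => (v : ℂ) ^ n *
            Complex.exp (-((4 * (π : ℂ) + 2 * π * y * Complex.I) * v))) v := by
      intro v
      rw [smul_eq_mul, hf]
      by_cases hv : v ∈ Ioi (0:ℝ)
      · rw [Set.indicator_of_mem hv, Set.indicator_of_mem hv, hg]
        rw [mul_comm, mul_assoc, ← Complex.exp_add]
        congr 1
        push_cast
        ring
      · rw [Set.indicator_of_notMem hv, Set.indicator_of_notMem hv, mul_zero]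
    rw [funext heq, MeasureTheory.integral_indicator measurableSet_Ioi,
      aux_gamma n hc, hmn]
    congr 2
    push_cast
    linear_combination (4 * (π : ℂ)) * Complex.I_sq
  -- integrability of the Fourier transform
  have hFf_int : Integrable (𝓕 f) := by
    have hFc : Continuous (fun y : ℝ =>
        (Nat.factorial n : ℂ) / (2 * π * Complex.I * ((y : ℂ) - 2 * Complex.I)) ^ m) := by
      apply Continuous.div continuous_const
      · continuity
      · intro y
        refine pow_ne_zero m (mul_ne_zero ?_ (aux_ne y))
        simp [Real.pi_ne_zero, Complex.ext_iff]
    refine (Integrable.congr ?_ (ae_of_all _ fun y => (hFf y).symm))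
    refine (integrable_inv_one_add_sq.const_mul (Nat.factorial n : ℝ)).mono'
      hFc.aestronglyMeasurable (ae_of_all _ fun y => ?_)
    rw [norm_div, norm_pow, norm_mul]
    have h2π : (1:ℝ) ≤ ‖2 * (π:ℂ) * Complex.I‖ := by
      have h2 : ‖2 * (π:ℂ) * Complex.I‖ = 2 * π := by
        simp [map_mul, abs_of_pos hπ]
      rw [h2]
      nlinarith [Real.pi_gt_three]
    have hb := aux_norm_bound m hm y
    have hpos : (0:ℝ) < 1 + y ^ 2 := by positivity
    have hnorm : ‖((Nat.factorial n : ℂ))‖ = (Nat.factorial n : ℝ) := by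
      simp
    rw [hnorm]
    have hden : 1 + y ^ 2 ≤ (‖2 * (π:ℂ) * Complex.I‖ * ‖(y:ℂ) - 2 * Complex.I‖) ^ m := by
      calc 1 + y ^ 2 ≤ ‖(y:ℂ) - 2 * Complex.I‖ ^ m := hb
        _ ≤ (‖2 * (π:ℂ) * Complex.I‖ * ‖(y:ℂ) - 2 * Complex.I‖) ^ m := by
            refine pow_le_pow_left₀ (norm_nonneg _) ?_ m
            nth_rewrite 1 [← one_mul ‖(y:ℂ) - 2 * Complex.I‖]
            exact mul_le_mul_of_nonneg_right h2π (norm_nonneg _)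
    rw [div_le_iff₀ (lt_of_lt_of_le hpos hden)]
    calc (Nat.factorial n : ℝ)
        = (Nat.factorial n : ℝ) * (1 + y ^ 2)⁻¹ * (1 + y ^ 2) := by field_simp
      _ ≤ (Nat.factorial n : ℝ) * (1 + y ^ 2)⁻¹ *
          (‖2 * (π:ℂ) * Complex.I‖ * ‖(y:ℂ) - 2 * Complex.I‖) ^ m :=
        mul_le_mul_of_nonneg_left hden (by positivity)
  -- continuity of f at 1
  have hgc : Continuous g := by
    rw [hg]
    exact (continuous_ofReal.pow n).mul
      ((continuous_const.mul continuous_ofReal).neg.cexp)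
  have hfc : ContinuousAt f 1 := by
    have hev : g =ᶠ[nhds (1:ℝ)] f := by
      filter_upwards [isOpen_Ioi.mem_nhds (by norm_num : (1:ℝ) ∈ Ioi 0)] with x hx
      exact (Set.indicator_of_mem hx g).symm
    exact hgc.continuousAt.congr hev
  have hinv := hf_int.fourierInv_fourier_eq hFf_int hfc
  have hL : 𝓕⁻ (𝓕 f) 1 = ((Nat.factorial n : ℂ) / (2 * π * Complex.I) ^ m) *
      ∫ y : ℝ, Complex.exp (2 * (π : ℂ) * Complex.I * y) / ((y : ℂ) - 2 * Complex.I) ^ m := by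
    calc 𝓕⁻ (𝓕 f) 1
        = ∫ v : ℝ, Complex.exp (↑(-2 * π * v * (-1 : ℝ)) * Complex.I) • 𝓕 f v := by
          rw [Real.fourierInv_eq_fourier_neg,
            Real.fourier_real_eq_integral_exp_smul]
      _ = ∫ v : ℝ, ((Nat.factorial n : ℂ) / (2 * π * Complex.I) ^ m) *
            (Complex.exp (2 * (π : ℂ) * Complex.I * v) / ((v : ℂ) - 2 * Complex.I) ^ m) := by
          congr 1
          funext v
          rw [smul_eq_mul, hFf v, mul_pow]
          rw [show Complex.exp (↑(-2 * π * v * (-1 : ℝ)) * Complex.I)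
              = Complex.exp (2 * (π : ℂ) * Complex.I * v) by congr 1; push_cast; ring]
          ring
      _ = _ := integral_const_mul _ _
  have hR : f 1 = Complex.exp (-4 * (π : ℂ)) := by
    rw [hf, Set.indicator_of_mem (by norm_num : (1:ℝ) ∈ Ioi 0), hg]
    norm_num
  rw [hL, hR] at hinv
  have hC2 : (2 * (π : ℂ) * Complex.I) ^ m ≠ 0 := by
    refine pow_ne_zero _ ?_
    simp [Real.pi_ne_zero, Complex.ext_iff]
  have hfacne : (Nat.factorial n : ℂ) ≠ 0 := Nat.cast_ne_zero.2 (Nat.factorial_ne_zero n)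
  field_simp at hinv ⊢
  linear_combination hinv
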